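/- arXiv:1609.02827 — 2 statements merged into one kernel-verified Lean document; each statement's English description precedes it below -/
import Mathlib

section
/- Let $b > 0$ be fixed and let $N \geq 1$ be a fixed integer. There exist constants $C > 0$ and $A > 0$, depending only on $N$ and $b$, such that for all $a \geq A$ and all $x \in (0,1]$, with $\xi = -\ln x$, $\left| I_x(a,b) - \frac{\Gamma(a+b)}{\Gamma(a)} \sum_{n=0}^{N-1} d_n F_n \right| \leq C\, a^{-N}\, \frac{\Gamma(a+b)}{\Gamma(a)}\, F_0$, where $d_n = f^{(n)}(\xi)/n!$ are the Taylor coefficients at $\xi$ of $f(t) = \left(\frac{1-e^{-t}}{t}\right)^{b-1}$ and $F_n = \frac{1}{\Gamma(b)} \int_{\xi}^{+\infty} t^{b-1} e^{-a t} (t-\xi)^n\, dt$. -/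
open Real MeasureTheory Set

namespace UAE

open Filter Topology intervalIntegral
open scoped ContDiff Nat

/-! ### Generic helpers -/

lemma natCast_le_infty (n : ℕ) : (n : WithTop ℕ∞) ≤ ∞ := by
  exact_mod_cast (le_top : (n : ℕ∞) ≤ ⊤)

lemma natCast_lt_infty (n : ℕ) : (n : WithTop ℕ∞) < ∞ := by
  have h : (n : ℕ∞) < ⊤ := lt_top_iff_ne_top.mpr (by simp)
  exact_mod_cast h

lemma rpow_anti {x y z : ℝ} (hx : 0 < x) (hxy : x ≤ y) (hz : z ≤ 0) : y ^ z ≤ x ^ z := by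
  have hy : 0 < y := lt_of_lt_of_le hx hxy
  rw [Real.rpow_def_of_pos hx, Real.rpow_def_of_pos hy]
  exact Real.exp_le_exp.mpr (mul_le_mul_of_nonpos_right (Real.log_le_log hx hxy) hz)

lemma sum_range_add_helper {M : Type*} [AddCommMonoid M] (f : ℕ → M) (m n : ℕ) :
    ∑ i ∈ Finset.range (m+n), f i
      = (∑ i ∈ Finset.range m, f i) + ∑ i ∈ Finset.range n, f (m+i) := by
  induction n with
  | zero => simp
  | succ n ih =>
      rw [show m + (n+1) = (m+n)+1 from rfl, Finset.sum_range_succ, ih,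
        Finset.sum_range_succ, add_assoc]

/-! ### Part 1: the smooth function `G` and smoothness of `f` -/

noncomputable def Gk (k : ℕ) : ℝ → ℝ := fun t => ∫ u in (0:ℝ)..1, (-u)^k * Real.exp (-(t*u))

lemma Gk_hasDerivAt (k : ℕ) (t₀ : ℝ) : HasDerivAt (Gk k) (Gk (k+1) t₀) t₀ := by
  have h := intervalIntegral.hasDerivAt_integral_of_dominated_loc_of_deriv_le
    (F := fun (x : ℝ) (u : ℝ) => (-u)^k * Real.exp (-(x*u)))
    (F' := fun (x : ℝ) (u : ℝ) => (-u)^(k+1) * Real.exp (-(x*u)))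
    (a := (0:ℝ)) (b := 1) (x₀ := t₀)
    (bound := fun _ => Real.exp (|t₀|+1)) (μ := volume) (s := Metric.ball t₀ 1) (Metric.ball_mem_nhds t₀ one_pos)
    ?_ ?_ ?_ ?_ ?_ ?_
  · exact h.2
  · filter_upwards with x
    exact (Continuous.aestronglyMeasurable (by fun_prop)).restrict
  · exact (Continuous.intervalIntegrable (by fun_prop) _ _)
  · exact (Continuous.aestronglyMeasurable (by fun_prop)).restrict
  · filter_upwards with u hu x hx
    rw [Set.uIoc_of_le (by norm_num : (0:ℝ) ≤ 1)] at hu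
    have hu0 : 0 < u := hu.1
    have hu1 : u ≤ 1 := hu.2
    have hx1 : |x| ≤ |t₀| + 1 := by
      have h1 := mem_ball_iff_norm.mp hx
      have h2 : |x| - |t₀| ≤ |x - t₀| := abs_sub_abs_le_abs_sub x t₀
      rw [Real.norm_eq_abs] at h1
      linarith
    have h3 : -(x*u) ≤ |t₀| + 1 := by
      have h3a : -(x*u) ≤ |x*u| := neg_le_abs _
      have h4 : |x*u| = |x| * u := by rw [abs_mul, abs_of_pos hu0]
      nlinarith [abs_nonneg x]
    have h5 : ‖(-u)^(k+1) * Real.exp (-(x*u))‖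
        = |(-u)^(k+1)| * Real.exp (-(x*u)) := by
      rw [norm_mul, Real.norm_eq_abs, Real.norm_eq_abs, abs_of_pos (Real.exp_pos _)]
    rw [h5]
    have h6 : |(-u)^(k+1)| ≤ 1 := by
      rw [abs_pow, abs_neg, abs_of_pos hu0]
      exact pow_le_one₀ hu0.le hu1
    calc |(-u)^(k+1)| * Real.exp (-(x*u)) ≤ 1 * Real.exp (|t₀|+1) := by
          apply mul_le_mul h6 (Real.exp_le_exp.mpr h3) (Real.exp_pos _).le one_pos.le
      _ = Real.exp (|t₀|+1) := one_mul _
  · exact intervalIntegrable_const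
  · filter_upwards with u hu x hx
    have h1 : HasDerivAt (fun x : ℝ => -(x*u)) (-u) x := by
      exact HasDerivAt.neg (by simpa using hasDerivAt_mul_const u)
    have h2 := (h1.exp).const_mul ((-u)^k)
    refine h2.congr_deriv ?_
    rw [pow_succ]
    ring

lemma Gk_contDiff (k : ℕ) : ContDiff ℝ (∞ : WithTop ℕ∞) (Gk k) := by
  rw [contDiff_infty]
  intro n
  induction n generalizing k with
  | zero =>
      exact contDiff_zero.mpr
        (Differentiable.continuous (fun t => (Gk_hasDerivAt k t).differentiableAt))
  | succ n ih =>
      have h : ContDiff ℝ ((n : WithTop ℕ∞) + 1) (Gk k) := by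
        rw [contDiff_succ_iff_deriv]
        refine ⟨fun t => (Gk_hasDerivAt k t).differentiableAt, by simp, ?_⟩
        have hd : deriv (Gk k) = Gk (k+1) := funext fun t => (Gk_hasDerivAt k t).deriv
        rw [hd]; exact ih (k+1)
      exact_mod_cast h

lemma Gk0_pos (t : ℝ) : 0 < Gk 0 t := by
  apply intervalIntegral.intervalIntegral_pos_of_pos_on
    (Continuous.intervalIntegrable (by fun_prop) _ _)
  · intro u _
    positivity
  · norm_num

lemma Gk0_eq {t : ℝ} (ht : t ≠ 0) : Gk 0 t = (1 - Real.exp (-t)) / t := by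
  have h : ∀ u ∈ uIcc (0:ℝ) 1,
      HasDerivAt (fun u : ℝ => -(Real.exp (-(t*u)) / t)) ((-u)^0 * Real.exp (-(t*u))) u := by
    intro u _
    have h1 : HasDerivAt (fun u : ℝ => -(t*u)) (-t) u := by
      exact HasDerivAt.neg (by simpa using (hasDerivAt_id u).const_mul t)
    have h2 := ((h1.exp).div_const t).neg
    refine h2.congr_deriv ?_
    field_simp
  have h3 := intervalIntegral.integral_eq_sub_of_hasDerivAt h
    (Continuous.intervalIntegrable (by fun_prop) _ _)
  show (∫ u in (0:ℝ)..1, (-u)^0 * Real.exp (-(t*u))) = _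
  rw [h3]
  simp only [mul_one, mul_zero, Real.exp_zero]
  field_simp
  rw [neg_zero, Real.exp_zero]
  ring

lemma Gk0_zero : Gk 0 0 = 1 := by
  simp [Gk]

variable {b : ℝ} {f : ℝ → ℝ}

lemma f_eq_G (hf : ∀ t : ℝ, f t = if t = 0 then 1 else ((1 - Real.exp (-t)) / t) ^ (b - 1)) :
    f = fun t => (Gk 0 t) ^ (b-1) := by
  funext t
  rw [hf t]
  by_cases ht : t = 0
  · simp [ht, Gk0_zero]
  · simp [ht, Gk0_eq ht]

lemma f_contDiff (hf : ∀ t : ℝ, f t = if t = 0 then 1 else ((1 - Real.exp (-t)) / t) ^ (b - 1)) :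
    ContDiff ℝ (∞ : WithTop ℕ∞) f := by
  rw [f_eq_G hf]
  rw [contDiff_iff_contDiffAt]
  intro x
  exact ((Gk_contDiff 0).contDiffAt).rpow_const_of_ne (Gk0_pos x).ne'

/-! ### Part 2: structure of iterated derivatives of `f` on `(0, ∞)` -/

def ST (b : ℝ) (E : ℝ → ℝ) : Prop := ∃ (m : ℕ) (p : ℕ → ℝ) (A : ℕ → ℝ → ℝ),
  (∀ k, p k ≤ 1-b) ∧ (∀ k, ContDiffOn ℝ (∞ : WithTop ℕ∞) (A k) (Iio 1)) ∧
  ∀ t, 0 < t → E t = ∑ k ∈ Finset.range m, t^(p k) * Real.exp (-t) * A k (Real.exp (-t))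

lemma ST_zero : ST b (fun _ => 0) :=
  ⟨0, fun _ => 1-b, fun _ _ => 0, fun _ => le_refl _, fun _ => contDiffOn_const,
    fun _ _ => by simp⟩

lemma ST_add {E₁ E₂ : ℝ → ℝ} (h₁ : ST b E₁) (h₂ : ST b E₂) : ST b (fun t => E₁ t + E₂ t) := by
  obtain ⟨m₁, p₁, A₁, hp₁, hA₁, hr₁⟩ := h₁
  obtain ⟨m₂, p₂, A₂, hp₂, hA₂, hr₂⟩ := h₂
  refine ⟨m₁ + m₂, fun k => if k < m₁ then p₁ k else p₂ (k - m₁),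
    fun k => if k < m₁ then A₁ k else A₂ (k - m₁), ?_, ?_, ?_⟩
  · intro k; by_cases h : k < m₁ <;> simp [h, hp₁, hp₂]
  · intro k; by_cases h : k < m₁ <;> simp [h, hA₁, hA₂]
  · intro t ht
    show E₁ t + E₂ t = _
    rw [hr₁ t ht, hr₂ t ht, sum_range_add_helper]
    congr 1
    · apply Finset.sum_congr rfl
      intro k hk
      have h : k < m₁ := Finset.mem_range.mp hk
      simp [h]
    · apply Finset.sum_congr rfl
      intro k _
      have h : ¬ (m₁ + k < m₁) := by omega
      simp [h]

lemma ST_single {p : ℝ} (hp : p ≤ 1-b) {A : ℝ → ℝ} (hA : ContDiffOn ℝ (∞ : WithTop ℕ∞) A (Iio 1)) :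
    ST b (fun t => t^p * Real.exp (-t) * A (Real.exp (-t))) :=
  ⟨1, fun _ => p, fun _ => A, fun _ => hp, fun _ => hA, fun t _ => by simp⟩

lemma contDiffOn_derivA {A : ℝ → ℝ} (hA : ContDiffOn ℝ (∞ : WithTop ℕ∞) A (Iio 1)) :
    ContDiffOn ℝ (∞ : WithTop ℕ∞) (deriv A) (Iio 1) :=
  hA.deriv_of_isOpen isOpen_Iio (by simp)

lemma hasDerivAt_term {A : ℝ → ℝ} (hA : ContDiffOn ℝ (∞ : WithTop ℕ∞) A (Iio 1)) {t : ℝ}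
    (ht : 0 < t) (q : ℝ) :
    HasDerivAt (fun t => t^q * A (Real.exp (-t)))
      (q * t^(q-1) * A (Real.exp (-t))
        + t^q * Real.exp (-t) * (-(deriv A (Real.exp (-t))))) t := by
  have hlt : Real.exp (-t) < 1 := by
    rw [Real.exp_lt_one_iff]; linarith
  have hAd : DifferentiableAt ℝ A (Real.exp (-t)) :=
    (hA.differentiableOn (by simp)).differentiableAt (Iio_mem_nhds hlt)
  have h1 : HasDerivAt (fun s : ℝ => s ^ q) (q * t ^ (q-1)) t :=
    Real.hasDerivAt_rpow_const (Or.inl ht.ne')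
  have h2 : HasDerivAt (fun t : ℝ => Real.exp (-t)) (-Real.exp (-t)) t := by
    simpa using (hasDerivAt_neg t).exp
  have h3 : HasDerivAt (fun t : ℝ => A (Real.exp (-t)))
      (deriv A (Real.exp (-t)) * (-Real.exp (-t))) t := (hAd.hasDerivAt).comp t h2
  have h4 := h1.mul h3
  refine h4.congr_deriv ?_
  ring

lemma ST_deriv {E : ℝ → ℝ} (hE : ST b E) :
    ∃ E' : ℝ → ℝ, ST b E' ∧ ∀ t, 0 < t → HasDerivAt E (E' t) t := by
  obtain ⟨m, p, A, hp, hA, hrep⟩ := hE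
  have hAt : ∀ k, ContDiffOn ℝ (∞ : WithTop ℕ∞) (fun x => x * A k x) (Iio 1) :=
    fun k => contDiffOn_id.mul (hA k)
  set E' : ℝ → ℝ := fun t => ∑ k ∈ Finset.range m,
    (p k * t^(p k - 1) * ((fun x => x * A k x) (Real.exp (-t)))
      + t^(p k) * Real.exp (-t) * (-(deriv (fun x => x * A k x) (Real.exp (-t))))) with hE'def
  refine ⟨E', ?_, ?_⟩
  · have hST1 : ST b (fun t => ∑ k ∈ Finset.range m,
        t^(p k - 1) * Real.exp (-t) * ((fun x => p k * A k x) (Real.exp (-t)))) :=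
      ⟨m, fun k => p k - 1, fun k x => p k * A k x,
        fun k => le_trans (sub_le_self _ one_pos.le) (hp k),
        fun k => contDiffOn_const.mul (hA k), fun t _ => rfl⟩
    have hST2 : ST b (fun t => ∑ k ∈ Finset.range m,
        t^(p k) * Real.exp (-t) * ((fun x => -(deriv (fun y => y * A k y) x)) (Real.exp (-t)))) :=
      ⟨m, p, fun k x => -(deriv (fun y => y * A k y) x), hp,
        fun k => (contDiffOn_derivA (hAt k)).neg, fun t _ => rfl⟩
    have heq : E' = fun t => (∑ k ∈ Finset.range m,
        t^(p k - 1) * Real.exp (-t) * ((fun x => p k * A k x) (Real.exp (-t))))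
        + ∑ k ∈ Finset.range m,
        t^(p k) * Real.exp (-t) * ((fun x => -(deriv (fun y => y * A k y) x)) (Real.exp (-t))) := by
      funext t
      rw [hE'def, ← Finset.sum_add_distrib]
      apply Finset.sum_congr rfl
      intro k _
      simp only []
      ring
    rw [heq]
    exact ST_add hST1 hST2
  · intro t ht
    have hsum : HasDerivAt (fun t => ∑ k ∈ Finset.range m,
        t^(p k) * Real.exp (-t) * A k (Real.exp (-t))) (E' t) t := by
      rw [hE'def]
      apply HasDerivAt.fun_sum
      intro k _
      have hfun : (fun t : ℝ => t^(p k) * Real.exp (-t) * A k (Real.exp (-t)))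
          = fun t => t^(p k) * ((fun x => x * A k x) (Real.exp (-t))) := by
        funext s; simp only []; ring
      rw [hfun]
      exact hasDerivAt_term (hAt k) ht (p k)
    have hev : E =ᶠ[𝓝 t] (fun t => ∑ k ∈ Finset.range m,
        t^(p k) * Real.exp (-t) * A k (Real.exp (-t))) :=
      eventually_of_mem (isOpen_Ioi.mem_nhds ht) (fun y hy => hrep y hy)
    exact hsum.congr_of_eventuallyEq hev

noncomputable def A0 (b : ℝ) : ℝ → ℝ := fun x => (1-x)^(b-1)

lemma A0_contDiffOn : ContDiffOn ℝ (∞ : WithTop ℕ∞) (A0 b) (Iio 1) := by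
  intro x hx
  have h : (1:ℝ) - x ≠ 0 := by
    have h1 : x < 1 := hx
    intro h2; apply h1.ne'; linarith
  exact (((contDiffAt_const (c := (1:ℝ))).sub contDiffAt_id).rpow_const_of_ne h).contDiffWithinAt

lemma repr_main (hb : 0 < b)
    (hf : ∀ t : ℝ, f t = if t = 0 then 1 else ((1 - Real.exp (-t)) / t) ^ (b - 1)) (n : ℕ) :
    ∃ (c : ℝ) (E : ℝ → ℝ), ST b E ∧
      ∀ t, 0 < t → iteratedDeriv n f t = c * t^(1-b-(n:ℝ)) * A0 b (Real.exp (-t)) + E t := by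
  induction n with
  | zero =>
      refine ⟨1, fun _ => 0, ST_zero, ?_⟩
      intro t ht
      rw [iteratedDeriv_zero, hf t, if_neg ht.ne']
      have hnn : (0:ℝ) ≤ 1 - Real.exp (-t) := by
        have h1 : Real.exp (-t) ≤ 1 := by
          rw [Real.exp_le_one_iff]; linarith
        linarith
      rw [Real.div_rpow hnn ht.le]
      have h2 : t ^ ((1:ℝ)-b-((0:ℕ):ℝ)) = (t ^ (b-1))⁻¹ := by
        rw [show (1:ℝ)-b-((0:ℕ):ℝ) = -(b-1) by push_cast; ring, Real.rpow_neg ht.le]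
      simp only [A0, h2, add_zero, one_mul]
      rw [div_eq_mul_inv, mul_comm]
  | succ n ih =>
      obtain ⟨c, E, hE, hrep⟩ := ih
      obtain ⟨E', hE', hdE⟩ := ST_deriv hE
      refine ⟨c * (1-b-(n:ℝ)),
        fun t => t^(1-b-(n:ℝ)) * Real.exp (-t)
          * ((fun x => -(c * deriv (A0 b) x)) (Real.exp (-t))) + E' t,
        ST_add (ST_single (by linarith [Nat.cast_nonneg (α := ℝ) n] : 1-b-(n:ℝ) ≤ 1-b)
          ((contDiffOn_const.mul (contDiffOn_derivA A0_contDiffOn)).neg)) hE', ?_⟩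
      intro t ht
      have hmain : HasDerivAt (fun t => c * (t^(1-b-(n:ℝ)) * A0 b (Real.exp (-t))))
          (c * ((1-b-(n:ℝ)) * t^(1-b-(n:ℝ)-1) * A0 b (Real.exp (-t))
            + t^(1-b-(n:ℝ)) * Real.exp (-t) * (-(deriv (A0 b) (Real.exp (-t)))))) t :=
        (hasDerivAt_term A0_contDiffOn ht (1-b-(n:ℝ))).const_mul c
      have hD : HasDerivAt (fun t => c * t^(1-b-(n:ℝ)) * A0 b (Real.exp (-t)) + E t)
          (c * ((1-b-(n:ℝ)) * t^(1-b-(n:ℝ)-1) * A0 b (Real.exp (-t))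
            + t^(1-b-(n:ℝ)) * Real.exp (-t) * (-(deriv (A0 b) (Real.exp (-t))))) + E' t) t := by
        have h1 := hmain.fun_add (hdE t ht)
        have hfun : (fun t => c * (t^(1-b-(n:ℝ)) * A0 b (Real.exp (-t))) + E t)
            = (fun t => c * t^(1-b-(n:ℝ)) * A0 b (Real.exp (-t)) + E t) := by
          funext s; ring
        rwa [hfun] at h1
      have hev : iteratedDeriv n f =ᶠ[𝓝 t]
          (fun t => c * t^(1-b-(n:ℝ)) * A0 b (Real.exp (-t)) + E t) :=
        eventually_of_mem (isOpen_Ioi.mem_nhds ht) (fun y hy => hrep y hy)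
      rw [iteratedDeriv_succ, hev.deriv_eq, hD.deriv]
      have hexp : (1:ℝ)-b-(n:ℝ)-1 = 1-b-((n+1:ℕ):ℝ) := by push_cast; ring
      rw [hexp]
      simp only []
      ring

lemma ST_bound {E : ℝ → ℝ} (hE : ST b E) : ∃ C, ∀ t, 1 ≤ t → |E t| ≤ C := by
  obtain ⟨m, p, A, hp, hA, hrep⟩ := hE
  have hIcc : Icc (0:ℝ) (Real.exp (-1)) ⊆ Iio 1 := by
    intro x hx
    exact lt_of_le_of_lt hx.2 (by rw [Real.exp_lt_one_iff]; norm_num)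
  have hsup : ∀ k, ∃ Ck, ∀ x ∈ Icc (0:ℝ) (Real.exp (-1)), |A k x| ≤ Ck := by
    intro k
    obtain ⟨Ck, hCk⟩ := isCompact_Icc.exists_bound_of_continuousOn
      (((hA k).continuousOn).mono hIcc)
    exact ⟨Ck, fun x hx => by simpa using hCk x hx⟩
  choose Cf hCf using hsup
  set m0 : ℕ := ⌈(1:ℝ)-b⌉₊ with hm0
  refine ⟨(∑ k ∈ Finset.range m, |Cf k|) * (m0)!, ?_⟩
  intro t ht
  have ht0 : 0 < t := lt_of_lt_of_le one_pos ht
  rw [hrep t ht0]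
  calc |∑ k ∈ Finset.range m, t^(p k) * Real.exp (-t) * A k (Real.exp (-t))|
      ≤ ∑ k ∈ Finset.range m, |t^(p k) * Real.exp (-t) * A k (Real.exp (-t))| :=
        Finset.abs_sum_le_sum_abs _ _
    _ ≤ ∑ k ∈ Finset.range m, |Cf k| * (m0)! := by
        apply Finset.sum_le_sum
        intro k _
        have hmem : Real.exp (-t) ∈ Icc (0:ℝ) (Real.exp (-1)) :=
          ⟨(Real.exp_pos _).le, Real.exp_le_exp.mpr (by linarith)⟩
        have h1 : |t^(p k) * Real.exp (-t) * A k (Real.exp (-t))|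
            = t^(p k) * Real.exp (-t) * |A k (Real.exp (-t))| := by
          rw [abs_mul, abs_of_nonneg (by positivity : (0:ℝ) ≤ t^(p k) * Real.exp (-t))]
        rw [h1]
        have h2 : t^(p k) ≤ t^(m0:ℝ) :=
          Real.rpow_le_rpow_of_exponent_le ht ((hp k).trans (Nat.le_ceil _))
        have h3 : t^(m0:ℝ) = t^m0 := Real.rpow_natCast t m0
        have h4 : t^(m0:ℝ) * Real.exp (-t) ≤ (m0)! := by
          rw [h3]
          have h5 : t^m0 / (m0)! ≤ Real.exp t := by
            calc t^m0 / ((m0)! : ℝ) ≤ ∑ i ∈ Finset.range (m0+1), t^i / i ! := by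
                  apply Finset.single_le_sum (f := fun i => t^i / (i ! : ℝ))
                  · intro i _; positivity
                  · exact Finset.self_mem_range_succ m0
              _ ≤ Real.exp t := Real.sum_le_exp_of_nonneg ht0.le _
          rw [div_le_iff₀ (by positivity : (0:ℝ) < ((m0)! : ℝ))] at h5
          rw [Real.exp_neg, ← div_eq_mul_inv, div_le_iff₀ (Real.exp_pos t)]
          linarith
        calc t^(p k) * Real.exp (-t) * |A k (Real.exp (-t))|
            ≤ ((m0)! : ℝ) * |Cf k| := by
              apply mul_le_mul
              · calc t^(p k) * Real.exp (-t) ≤ t^(m0:ℝ) * Real.exp (-t) :=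
                      mul_le_mul_of_nonneg_right h2 (Real.exp_pos _).le
                  _ ≤ (m0)! := h4
              · exact (hCf k _ hmem).trans (le_abs_self _)
              · exact abs_nonneg _
              · positivity
          _ = |Cf k| * (m0)! := by ring
    _ = (∑ k ∈ Finset.range m, |Cf k|) * (m0)! := by rw [Finset.sum_mul]

lemma derivN_bound (hb : 0 < b)
    (hf : ∀ t : ℝ, f t = if t = 0 then 1 else ((1 - Real.exp (-t)) / t) ^ (b - 1))
    {N : ℕ} (hN : 1 ≤ N) : ∃ M, 0 ≤ M ∧ ∀ t, 0 ≤ t → |iteratedDeriv N f t| ≤ M := by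
  obtain ⟨c, E, hE, hrep⟩ := repr_main hb hf N
  obtain ⟨CE, hCE⟩ := ST_bound hE
  have hIcc : Icc (0:ℝ) (Real.exp (-1)) ⊆ Iio 1 := by
    intro x hx
    exact lt_of_le_of_lt hx.2 (by rw [Real.exp_lt_one_iff]; norm_num)
  obtain ⟨CA, hCA⟩ := isCompact_Icc.exists_bound_of_continuousOn
    ((A0_contDiffOn (b := b)).continuousOn.mono hIcc)
  have hcont : Continuous (iteratedDeriv N f) :=
    (f_contDiff hf).continuous_iteratedDeriv N (natCast_le_infty N)
  obtain ⟨M1, hM1⟩ := (isCompact_Icc (a := (0:ℝ)) (b := 1)).exists_bound_of_continuousOn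
    hcont.continuousOn
  refine ⟨max (max M1 (|c| * CA + CE)) 0, le_max_right _ _, ?_⟩
  intro t ht
  rcases le_or_gt t 1 with h1 | h1
  · calc |iteratedDeriv N f t| ≤ M1 := by simpa using hM1 t ⟨ht, h1⟩
      _ ≤ _ := le_max_of_le_left (le_max_left _ _)
  · have ht0 : 0 < t := by linarith
    have hmem : Real.exp (-t) ∈ Icc (0:ℝ) (Real.exp (-1)) :=
      ⟨(Real.exp_pos _).le, Real.exp_le_exp.mpr (by linarith)⟩
    have hA0b : |A0 b (Real.exp (-t))| ≤ CA := by simpa using hCA _ hmem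
    have hpow : t ^ ((1:ℝ)-b-(N:ℝ)) ≤ 1 := by
      apply Real.rpow_le_one_of_one_le_of_nonpos h1.le
      have hc : (1:ℝ) ≤ (N:ℝ) := by exact_mod_cast hN
      linarith
    have hpow0 : 0 ≤ t ^ ((1:ℝ)-b-(N:ℝ)) := Real.rpow_nonneg ht _
    have hCA0 : 0 ≤ CA := le_trans (abs_nonneg _) hA0b
    calc |iteratedDeriv N f t|
        = |c * t ^ ((1:ℝ)-b-(N:ℝ)) * A0 b (Real.exp (-t)) + E t| := by rw [hrep t ht0]
      _ ≤ |c * t ^ ((1:ℝ)-b-(N:ℝ)) * A0 b (Real.exp (-t))| + |E t| := abs_add_le _ _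
      _ ≤ |c| * CA + CE := by
          have h3 : |c * t ^ ((1:ℝ)-b-(N:ℝ)) * A0 b (Real.exp (-t))|
              = |c| * t ^ ((1:ℝ)-b-(N:ℝ)) * |A0 b (Real.exp (-t))| := by
            rw [abs_mul, abs_mul, abs_of_nonneg hpow0]
          have h4 : |c| * t ^ ((1:ℝ)-b-(N:ℝ)) * |A0 b (Real.exp (-t))| ≤ |c| * 1 * CA := by
            apply mul_le_mul (mul_le_mul_of_nonneg_left hpow (abs_nonneg c)) hA0b
              (abs_nonneg _) (by positivity)
          have h5 := hCE t h1.le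
          rw [h3]
          rw [mul_one] at h4
          linarith
      _ ≤ _ := le_max_of_le_left (le_max_right _ _)

/-! ### Part 3: Taylor remainder -/

lemma iDW_eq {g : ℝ → ℝ} (hg : ContDiff ℝ (∞ : WithTop ℕ∞) g) {s : Set ℝ}
    (hs : UniqueDiffOn ℝ s) {x : ℝ} (hx : x ∈ s) (n : ℕ) :
    iteratedDerivWithin n g s x = iteratedDeriv n g x := by
  have h1 := (contDiffOn_univ.mpr hg).ftaylorSeriesWithin uniqueDiffOn_univ
  rw [ftaylorSeriesWithin_univ] at h1
  have H : HasFTaylorSeriesUpToOn (∞ : WithTop ℕ∞) g (ftaylorSeries ℝ g) s :=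
    h1.mono (subset_univ s)
  have h2 := H.eq_iteratedFDerivWithin_of_uniqueDiffOn (m := n) (natCast_le_infty n) hs hx
  rw [iteratedDerivWithin_eq_iteratedFDerivWithin, iteratedDeriv_eq_iteratedFDeriv, ← h2]
  rfl

lemma taylor_bound (hf : ∀ t : ℝ, f t = if t = 0 then 1 else ((1 - Real.exp (-t)) / t) ^ (b - 1))
    {N : ℕ} (hN : 1 ≤ N) {M : ℝ} (hM : ∀ t, 0 ≤ t → |iteratedDeriv N f t| ≤ M)
    {ξ t : ℝ} (hξ : 0 ≤ ξ) (ht : ξ < t) :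
    |f t - ∑ n ∈ Finset.range N, iteratedDeriv n f ξ / (Nat.factorial n : ℝ) * (t-ξ)^n|
      ≤ M / (Nat.factorial N : ℝ) * (t-ξ)^N := by
  have hfC : ContDiff ℝ (∞ : WithTop ℕ∞) f := f_contDiff hf
  set n := N - 1 with hn
  have hn1 : n + 1 = N := Nat.succ_pred_eq_of_pos hN
  have hC : ContDiffOn ℝ (n : ℕ) f (Icc ξ t) := (hfC.of_le (natCast_le_infty n)).contDiffOn
  have hud : UniqueDiffOn ℝ (Icc ξ t) := uniqueDiffOn_Icc ht
  have hD : DifferentiableOn ℝ (iteratedDerivWithin n f (Icc ξ t)) (Ioo ξ t) := by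
    have hdiff : Differentiable ℝ (iteratedDeriv n f) :=
      hfC.differentiable_iteratedDeriv n (natCast_lt_infty n)
    apply DifferentiableOn.congr (hdiff.differentiableOn)
    intro y hy
    exact iDW_eq hfC hud (Ioo_subset_Icc_self hy) n
  obtain ⟨x', hx', heq⟩ := taylor_mean_remainder_lagrange ht.ne (by rwa [uIcc_of_le ht.le])
    (by rwa [uIcc_of_le ht.le, uIoo_of_le ht.le])
  rw [uIoo_of_le ht.le] at hx'
  rw [uIcc_of_le ht.le] at heq
  have hT : taylorWithinEval f n (Icc ξ t) ξ t
      = ∑ k ∈ Finset.range N, iteratedDeriv k f ξ / (Nat.factorial k : ℝ) * (t-ξ)^k := by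
    rw [taylor_within_apply, hn1]
    apply Finset.sum_congr rfl
    intro k _
    rw [iDW_eq hfC hud (left_mem_Icc.mpr ht.le) k, smul_eq_mul]
    ring
  rw [hn1] at heq
  rw [hT] at heq
  rw [heq, iDW_eq hfC hud (Ioo_subset_Icc_self hx') N]
  have hb1 : |iteratedDeriv N f x'| ≤ M := hM x' (le_trans hξ hx'.1.le)
  rw [abs_div, abs_mul, abs_pow, abs_of_pos (sub_pos.mpr ht), Nat.abs_cast]
  calc |iteratedDeriv N f x'| * (t-ξ)^N / ((N)! : ℝ)
      ≤ M * (t-ξ)^N / ((N)! : ℝ) := by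
        gcongr
    _ = M / ((N)! : ℝ) * (t-ξ)^N := by ring

/-! ### Part 4: integral estimates -/

lemma integrableOn_rpow_exp {c a : ℝ} (hc : -1 < c) (ha : 0 < a) :
    IntegrableOn (fun t => t^c * Real.exp (-(a*t))) (Ioi (0:ℝ)) := by
  have h0 : IntegrableOn (fun x : ℝ => Real.exp (-x) * x ^ (c+1-1)) (Ioi (0:ℝ)) :=
    Real.GammaIntegral_convergent (by linarith)
  have h1 : IntegrableOn (fun t : ℝ => Real.exp (-(a*t)) * (a*t) ^ (c+1-1)) (Ioi (0:ℝ)) := by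
    have h2 := (integrableOn_Ioi_comp_mul_left_iff
      (fun x : ℝ => Real.exp (-x) * x ^ (c+1-1)) 0 ha).mpr
    rw [mul_zero] at h2
    exact h2 h0
  have h3 := h1.const_mul ((a:ℝ)^c)⁻¹
  apply IntegrableOn.congr_fun h3 ?_ measurableSet_Ioi
  intro t ht
  have ht0 : 0 < t := ht
  have hap : (0:ℝ) < a^c := Real.rpow_pos_of_pos ha c
  simp only []
  rw [show c+1-1 = c by ring, Real.mul_rpow ha.le ht0.le]
  field_simp

lemma integrableOn_w (hb : 0 < b) {a ξ : ℝ} (ha : 0 < a) (hξ : 0 ≤ ξ) (n : ℕ) :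
    IntegrableOn (fun t => t^(b-1) * Real.exp (-(a*t)) * (t-ξ)^n) (Ioi ξ) := by
  have hmaj : IntegrableOn (fun t => t^(b-1+(n:ℝ)) * Real.exp (-(a*t))) (Ioi ξ) :=
    (integrableOn_rpow_exp (by push_cast; linarith [Nat.cast_nonneg (α := ℝ) n]) ha).mono_set
      (Ioi_subset_Ioi hξ)
  apply Integrable.mono hmaj ?_ ?_
  · apply ContinuousOn.aestronglyMeasurable ?_ measurableSet_Ioi
    apply ContinuousOn.mul
    apply ContinuousOn.mul
    · exact fun t ht => (Real.continuousAt_rpow_const t _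
        (Or.inl (lt_of_le_of_lt hξ ht).ne')).continuousWithinAt
    · exact (Real.continuous_exp.comp (continuous_const.mul continuous_id).neg).continuousOn
    · exact (continuous_pow n).comp (continuous_id.sub continuous_const) |>.continuousOn
  · filter_upwards [ae_restrict_mem measurableSet_Ioi] with t ht
    have htξ : ξ < t := ht
    have ht0 : 0 < t := lt_of_le_of_lt hξ htξ
    have h1 : ‖t^(b-1) * Real.exp (-(a*t)) * (t-ξ)^n‖
        = t^(b-1) * Real.exp (-(a*t)) * (t-ξ)^n := by
      rw [Real.norm_eq_abs, abs_of_nonneg]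
      have := sub_nonneg.mpr htξ.le
      positivity
    have h2 : ‖t^(b-1+(n:ℝ)) * Real.exp (-(a*t))‖ = t^(b-1) * t^(n:ℝ) * Real.exp (-(a*t)) := by
      rw [Real.norm_eq_abs, abs_of_nonneg (by positivity), Real.rpow_add ht0]
    rw [h1, h2]
    have h3 : (t-ξ)^n ≤ t^n := pow_le_pow_left₀ (sub_nonneg.mpr htξ.le) (by linarith) n
    calc t^(b-1) * Real.exp (-(a*t)) * (t-ξ)^n ≤ t^(b-1) * Real.exp (-(a*t)) * t^n := by
          apply mul_le_mul_of_nonneg_left h3 (by positivity)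
      _ = t^(b-1) * t^(n:ℝ) * Real.exp (-(a*t)) := by rw [Real.rpow_natCast]; ring

lemma wf_eq (hf : ∀ t : ℝ, f t = if t = 0 then 1 else ((1 - Real.exp (-t)) / t) ^ (b - 1))
    {a t : ℝ} (ht : 0 < t) :
    t^(b-1) * Real.exp (-(a*t)) * f t = (1 - Real.exp (-t))^(b-1) * Real.exp (-(a*t)) := by
  have hnn : (0:ℝ) ≤ 1 - Real.exp (-t) := by
    have h1 : Real.exp (-t) ≤ 1 := by rw [Real.exp_le_one_iff]; linarith
    linarith
  rw [hf t, if_neg ht.ne', Real.div_rpow hnn ht.le]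
  have hne : t^(b-1) ≠ 0 := (Real.rpow_pos_of_pos ht _).ne'
  field_simp

lemma integrableOn_wf (hb : 0 < b)
    (hf : ∀ t : ℝ, f t = if t = 0 then 1 else ((1 - Real.exp (-t)) / t) ^ (b - 1))
    {a ξ : ℝ} (ha : 0 < a) (hξ : 0 ≤ ξ) :
    IntegrableOn (fun t => t^(b-1) * Real.exp (-(a*t)) * f t) (Ioi ξ) := by
  set K : ℝ := 2^((1:ℝ)-b) + (1-Real.exp (-1))^(b-1) + 1 with hK
  have he1 : (0:ℝ) < 1 - Real.exp (-1) := by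
    have := Real.exp_lt_one_iff.mpr (by norm_num : (-1:ℝ) < 0)
    linarith
  have hK1 : (1:ℝ) ≤ K := by
    have h1 : (0:ℝ) < 2^((1:ℝ)-b) := Real.rpow_pos_of_pos (by norm_num) _
    have h2 : (0:ℝ) ≤ (1-Real.exp (-1))^(b-1) := Real.rpow_nonneg he1.le _
    rw [hK]; linarith
  have hmaj : IntegrableOn
      (fun t => K * (t^(b-1) * Real.exp (-(a*t))) + K * Real.exp (-(a*t))) (Ioi ξ) := by
    apply Integrable.add
    · exact ((integrableOn_rpow_exp (by linarith) ha).mono_set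
        (Ioi_subset_Ioi hξ)).const_mul K
    · have h1 : IntegrableOn (fun t : ℝ => Real.exp (-a*t)) (Ioi ξ) :=
        exp_neg_integrableOn_Ioi ξ ha
      have h2 : IntegrableOn (fun t : ℝ => Real.exp (-(a*t))) (Ioi ξ) := by
        simpa [neg_mul] using h1
      exact h2.const_mul K
  apply Integrable.mono hmaj ?_ ?_
  · apply ContinuousOn.aestronglyMeasurable ?_ measurableSet_Ioi
    apply ContinuousOn.mul
    apply ContinuousOn.mul
    · exact fun t ht => (Real.continuousAt_rpow_const t _
        (Or.inl (lt_of_le_of_lt hξ ht).ne')).continuousWithinAt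
    · exact (Real.continuous_exp.comp (continuous_const.mul continuous_id).neg).continuousOn
    · exact (f_contDiff hf).continuous.continuousOn
  · filter_upwards [ae_restrict_mem measurableSet_Ioi] with t ht
    have htξ : ξ < t := ht
    have ht0 : 0 < t := lt_of_le_of_lt hξ htξ
    have hnn : (0:ℝ) ≤ 1 - Real.exp (-t) := by
      have h1 : Real.exp (-t) ≤ 1 := by rw [Real.exp_le_one_iff]; linarith
      linarith
    have h1 : ‖t^(b-1) * Real.exp (-(a*t)) * f t‖
        = (1 - Real.exp (-t))^(b-1) * Real.exp (-(a*t)) := by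
      rw [wf_eq hf ht0, Real.norm_eq_abs, abs_of_nonneg (by positivity)]
    rw [h1]
    have hstep : (1 - Real.exp (-t))^(b-1) ≤ K * t^(b-1) + K := by
      rcases le_or_gt 1 b with hbc | hbc
      · have h2 : (1 - Real.exp (-t))^(b-1) ≤ 1 := by
          apply Real.rpow_le_one hnn (by linarith [(Real.exp_pos (-t)).le]) (by linarith)
        have h3 : (0:ℝ) ≤ K * t^(b-1) := by positivity
        linarith
      · rcases le_or_gt t 1 with htc | htc
        · have hlow : t/2 ≤ 1 - Real.exp (-t) := by
            have h2 : 1 + t ≤ Real.exp t := by linarith [Real.add_one_le_exp t]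
            have h3 : Real.exp (-t) ≤ (1+t)⁻¹ := by
              rw [Real.exp_neg]
              apply inv_anti₀ (by linarith) h2
            have h4 : (1+t)⁻¹ ≤ 1 - t/2 := by
              rw [inv_eq_one_div, div_le_iff₀ (by linarith : (0:ℝ) < 1+t)]
              nlinarith [mul_nonneg ht0.le (sub_nonneg.mpr htc)]
            linarith
          have h2 : (1 - Real.exp (-t))^(b-1) ≤ (t/2)^(b-1) :=
            rpow_anti (by linarith) hlow (by linarith)
          have h3 : (t/2)^(b-1) = t^(b-1) * ((2:ℝ)^((1:ℝ)-b)) := by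
            rw [Real.div_rpow ht0.le (by norm_num), div_eq_mul_inv,
              ← Real.rpow_neg (by norm_num : (0:ℝ) ≤ 2), neg_sub]
          have h4 : t^(b-1) * ((2:ℝ)^((1:ℝ)-b)) ≤ K * t^(b-1) := by
            have h5 : (2:ℝ)^((1:ℝ)-b) ≤ K := by
              have h6 : (0:ℝ) ≤ (1-Real.exp (-1))^(b-1) := Real.rpow_nonneg he1.le _
              rw [hK]; linarith
            calc t^(b-1) * ((2:ℝ)^((1:ℝ)-b)) ≤ t^(b-1) * K :=
                  mul_le_mul_of_nonneg_left h5 (Real.rpow_nonneg ht0.le _)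
              _ = K * t^(b-1) := mul_comm _ _
          nlinarith [hK1]
        · have hlow : 1 - Real.exp (-1) ≤ 1 - Real.exp (-t) := by
            have := Real.exp_le_exp.mpr (by linarith : -t ≤ -1)
            linarith
          have h2 : (1 - Real.exp (-t))^(b-1) ≤ (1 - Real.exp (-1))^(b-1) :=
            rpow_anti he1 hlow (by linarith)
          have h3 : (1 - Real.exp (-1))^(b-1) ≤ K := by
            have h1 : (0:ℝ) < 2^((1:ℝ)-b) := Real.rpow_pos_of_pos (by norm_num) _
            rw [hK]; linarith
          have h4 : (0:ℝ) ≤ K * t^(b-1) := by positivity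
          linarith
    calc (1 - Real.exp (-t))^(b-1) * Real.exp (-(a*t))
        ≤ (K * t^(b-1) + K) * Real.exp (-(a*t)) :=
          mul_le_mul_of_nonneg_right hstep (Real.exp_pos _).le
      _ = K * (t^(b-1) * Real.exp (-(a*t))) + K * Real.exp (-(a*t)) := by ring
      _ ≤ ‖K * (t^(b-1) * Real.exp (-(a*t))) + K * Real.exp (-(a*t))‖ := le_abs_self _

lemma change_var (hb : 0 < b)
    (hf : ∀ t : ℝ, f t = if t = 0 then 1 else ((1 - Real.exp (-t)) / t) ^ (b - 1))
    {a x ξ : ℝ} (ha : 0 < a) (hx0 : 0 < x) (hx1 : x ≤ 1) (hξdef : ξ = -Real.log x) :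
    ∫ t in (0:ℝ)..x, t^(a-1) * (1-t)^(b-1)
      = ∫ s in Ioi ξ, s^(b-1) * Real.exp (-(a*s)) * f s := by
  have hξ0 : 0 ≤ ξ := by
    rw [hξdef, neg_nonneg]
    exact Real.log_nonpos hx0.le hx1
  have hexpξ : Real.exp (-ξ) = x := by rw [hξdef, neg_neg, Real.exp_log hx0]
  have himg : (fun s : ℝ => Real.exp (-s)) '' (Ioi ξ) = Ioo 0 x := by
    ext y
    constructor
    · rintro ⟨s, hs, rfl⟩
      exact ⟨Real.exp_pos _, by rw [← hexpξ]; exact Real.exp_lt_exp.mpr (by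
        simp only [mem_Ioi] at hs; linarith)⟩
    · rintro ⟨hy0, hyx⟩
      refine ⟨-Real.log y, ?_, show Real.exp (-(-Real.log y)) = y by
        rw [neg_neg, Real.exp_log hy0]⟩
      simp only [mem_Ioi]
      rw [hξdef]
      have := Real.log_lt_log hy0 hyx
      linarith
  have hder : ∀ s ∈ Ioi ξ, HasDerivWithinAt (fun s : ℝ => Real.exp (-s))
      (-Real.exp (-s)) (Ioi ξ) s := by
    intro s _
    exact (by simpa using (hasDerivAt_neg s).exp : HasDerivAt (fun s : ℝ => Real.exp (-s))
      (-Real.exp (-s)) s).hasDerivWithinAt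
  have hinj : InjOn (fun s : ℝ => Real.exp (-s)) (Ioi ξ) := by
    intro s _ r _ h
    have := Real.exp_injective h
    linarith [neg_injective this]
  have h := integral_image_eq_integral_abs_deriv_smul measurableSet_Ioi hder hinj
    (fun t => t^(a-1) * (1-t)^(b-1))
  rw [himg] at h
  rw [intervalIntegral.integral_of_le hx0.le, integral_Ioc_eq_integral_Ioo, h]
  apply setIntegral_congr_fun measurableSet_Ioi
  intro s hs
  have hs0 : 0 < s := lt_of_le_of_lt hξ0 hs
  simp only [smul_eq_mul, abs_neg, Real.abs_exp]
  rw [wf_eq hf hs0]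
  have h2 : (Real.exp (-s))^(a-1) = Real.exp (-s*(a-1)) := (Real.exp_mul (-s) (a-1)).symm
  rw [h2]
  have h3 : Real.exp (-s) * Real.exp (-s*(a-1)) = Real.exp (-(a*s)) := by
    rw [← Real.exp_add]; congr 1; ring
  calc Real.exp (-s) * (Real.exp (-s*(a-1)) * (1-Real.exp (-s))^(b-1))
      = (Real.exp (-s) * Real.exp (-s*(a-1))) * (1-Real.exp (-s))^(b-1) := by ring
    _ = (1 - Real.exp (-s))^(b-1) * Real.exp (-(a*s)) := by rw [h3]; ring

lemma compare_FN (hb : 0 < b) {a ξ : ℝ} (ha : 0 < a) (hξ : 0 ≤ ξ) (N : ℕ) :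
    ∫ t in Ioi ξ, t^(b-1) * Real.exp (-(a*t)) * (t-ξ)^N
      ≤ ((2*(N:ℝ))^N * (a⁻¹)^N * (2 * max 1 (2^(b-1)))) *
        ∫ t in Ioi ξ, t^(b-1) * Real.exp (-(a*t)) := by
  set c2 : ℝ := max 1 ((2:ℝ)^(b-1)) with hc2
  have hc21 : (1:ℝ) ≤ c2 := le_max_left _ _
  -- base integrand integrability on `Ioi ξ`
  have hbase : IntegrableOn (fun t : ℝ => t^(b-1) * Real.exp (-(a*t))) (Ioi ξ) :=
    (integrableOn_rpow_exp (by linarith) ha).mono_set (Ioi_subset_Ioi hξ)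
  have hhalf : IntegrableOn (fun t : ℝ => t^(b-1) * Real.exp (-(a*(t+ξ)/2))) (Ioi ξ) := by
    have h1 : IntegrableOn (fun t : ℝ => t^(b-1) * Real.exp (-(a/2*t))) (Ioi ξ) :=
      (integrableOn_rpow_exp (by linarith) (by positivity)).mono_set (Ioi_subset_Ioi hξ)
    have h2 := (h1.const_mul (Real.exp (-(a*ξ/2))))
    apply IntegrableOn.congr_fun h2 ?_ measurableSet_Ioi
    intro t _
    have h3 : Real.exp (-(a*ξ/2)) * Real.exp (-(a/2*t)) = Real.exp (-(a*(t+ξ)/2)) := by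
      rw [← Real.exp_add]; congr 1; ring
    simp only []
    rw [← h3]
    ring
  -- Step A: pointwise bound
  have hptA : ∀ t ∈ Ioi ξ, t^(b-1) * Real.exp (-(a*t)) * (t-ξ)^N
      ≤ (2*(N:ℝ)/a)^N * (t^(b-1) * Real.exp (-(a*(t+ξ)/2))) := by
    intro t ht
    have htξ : ξ < t := ht
    have ht0 : 0 < t := lt_of_le_of_lt hξ htξ
    have hu0 : (0:ℝ) ≤ t - ξ := by linarith
    have hkey : (t-ξ)^N ≤ (2*(N:ℝ)/a)^N * Real.exp (a*(t-ξ)/2) := by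
      rcases Nat.eq_zero_or_pos N with h0 | hpos
      · subst h0
        simp only [pow_zero, one_mul]
        calc (1:ℝ) = Real.exp 0 := Real.exp_zero.symm
          _ ≤ Real.exp (a*(t-ξ)/2) := Real.exp_le_exp.mpr (by positivity)
      · have hN0 : (0:ℝ) < (N:ℝ) := by exact_mod_cast hpos
        have hv : t - ξ ≤ (2*(N:ℝ)/a) * Real.exp (a*(t-ξ)/(2*(N:ℝ))) := by
          have h1 : a*(t-ξ)/(2*(N:ℝ)) ≤ Real.exp (a*(t-ξ)/(2*(N:ℝ))) := by
            linarith [Real.add_one_le_exp (a*(t-ξ)/(2*(N:ℝ)))]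
          have h2 : (2*(N:ℝ)/a) * (a*(t-ξ)/(2*(N:ℝ))) = t - ξ := by
            field_simp
          calc t - ξ = (2*(N:ℝ)/a) * (a*(t-ξ)/(2*(N:ℝ))) := h2.symm
            _ ≤ (2*(N:ℝ)/a) * Real.exp (a*(t-ξ)/(2*(N:ℝ))) :=
                mul_le_mul_of_nonneg_left h1 (by positivity)
        calc (t-ξ)^N ≤ ((2*(N:ℝ)/a) * Real.exp (a*(t-ξ)/(2*(N:ℝ))))^N :=
              pow_le_pow_left₀ hu0 hv N
          _ = (2*(N:ℝ)/a)^N * Real.exp (a*(t-ξ)/2) := by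
              rw [mul_pow, ← Real.exp_nat_mul]
              congr 1
              field_simp
    have hexp : Real.exp (-(a*t)) * Real.exp (a*(t-ξ)/2) = Real.exp (-(a*(t+ξ)/2)) := by
      rw [← Real.exp_add]; congr 1; ring
    calc t^(b-1) * Real.exp (-(a*t)) * (t-ξ)^N
        ≤ t^(b-1) * Real.exp (-(a*t)) * ((2*(N:ℝ)/a)^N * Real.exp (a*(t-ξ)/2)) :=
          mul_le_mul_of_nonneg_left hkey (by positivity)
      _ = (2*(N:ℝ)/a)^N * (t^(b-1) * Real.exp (-(a*(t+ξ)/2))) := by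
          rw [← hexp]; ring
  -- Step B: substitution t = 2u - ξ
  have hsub : (∫ t in Ioi ξ, t^(b-1) * Real.exp (-(a*(t+ξ)/2)))
      = ∫ u in Ioi ξ, 2 * ((2*u-ξ)^(b-1) * Real.exp (-(a*u))) := by
    have himg : (fun u : ℝ => 2*u-ξ) '' (Ioi ξ) = Ioi ξ := by
      ext y
      constructor
      · rintro ⟨u, hu, rfl⟩
        simp only [mem_Ioi] at *
        linarith
      · intro hy
        simp only [mem_Ioi] at hy
        exact ⟨(y+ξ)/2, by simp only [mem_Ioi]; linarith, by ring⟩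
    have hder : ∀ u ∈ Ioi ξ, HasDerivWithinAt (fun u : ℝ => 2*u-ξ) 2 (Ioi ξ) u := by
      intro u _
      exact (by simpa using ((hasDerivAt_id u).const_mul 2).sub_const ξ :
        HasDerivAt (fun u : ℝ => 2*u-ξ) 2 u).hasDerivWithinAt
    have hinj : InjOn (fun u : ℝ => 2*u-ξ) (Ioi ξ) := by
      intro u _ v _ h
      simp only [] at h
      linarith
    have h := integral_image_eq_integral_abs_deriv_smul measurableSet_Ioi hder hinj
      (fun t => t^(b-1) * Real.exp (-(a*(t+ξ)/2)))
    rw [himg] at h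
    rw [h]
    apply setIntegral_congr_fun measurableSet_Ioi
    intro u _
    simp only [smul_eq_mul]
    have h2 : a*(2*u-ξ+ξ)/2 = a*u := by ring
    rw [h2, abs_of_pos (by norm_num : (0:ℝ) < 2)]
  -- Step C: pointwise comparison after substitution
  have hptC : ∀ u ∈ Ioi ξ, 2 * ((2*u-ξ)^(b-1) * Real.exp (-(a*u)))
      ≤ 2 * c2 * (u^(b-1) * Real.exp (-(a*u))) := by
    intro u hu
    have huξ : ξ < u := hu
    have hu0 : 0 < u := lt_of_le_of_lt hξ huξ
    have h2u : u ≤ 2*u-ξ := by linarith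
    have hcase : (2*u-ξ)^(b-1) ≤ c2 * u^(b-1) := by
      rcases le_or_gt 1 b with hbc | hbc
      · have h1 : (2*u-ξ)^(b-1) ≤ (2*u)^(b-1) :=
          Real.rpow_le_rpow (by linarith) (by linarith) (by linarith)
        have h2 : ((2:ℝ)*u)^(b-1) = 2^(b-1) * u^(b-1) :=
          Real.mul_rpow (by norm_num) hu0.le
        have h3 : (2:ℝ)^(b-1) ≤ c2 := le_max_right _ _
        calc (2*u-ξ)^(b-1) ≤ 2^(b-1) * u^(b-1) := by rw [← h2]; exact h1
          _ ≤ c2 * u^(b-1) := mul_le_mul_of_nonneg_right h3 (Real.rpow_nonneg hu0.le _)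
      · have h1 : (2*u-ξ)^(b-1) ≤ u^(b-1) := rpow_anti hu0 h2u (by linarith)
        calc (2*u-ξ)^(b-1) ≤ u^(b-1) := h1
          _ ≤ c2 * u^(b-1) := le_mul_of_one_le_left (Real.rpow_nonneg hu0.le _) hc21
    calc 2 * ((2*u-ξ)^(b-1) * Real.exp (-(a*u)))
        ≤ 2 * ((c2 * u^(b-1)) * Real.exp (-(a*u))) := by
          apply mul_le_mul_of_nonneg_left ?_ (by norm_num)
          exact mul_le_mul_of_nonneg_right hcase (Real.exp_pos _).le
      _ = 2 * c2 * (u^(b-1) * Real.exp (-(a*u))) := by ring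
  -- Assemble
  have hA : (∫ t in Ioi ξ, t^(b-1) * Real.exp (-(a*t)) * (t-ξ)^N)
      ≤ ∫ t in Ioi ξ, (2*(N:ℝ)/a)^N * (t^(b-1) * Real.exp (-(a*(t+ξ)/2))) := by
    apply integral_mono_of_nonneg
    · filter_upwards [ae_restrict_mem measurableSet_Ioi] with t ht
      have htξ : ξ < t := ht
      have ht0 : 0 < t := lt_of_le_of_lt hξ htξ
      have := sub_nonneg.mpr htξ.le
      positivity
    · exact hhalf.const_mul _
    · filter_upwards [ae_restrict_mem measurableSet_Ioi] with t ht
      exact hptA t ht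
  have hB : (∫ u in Ioi ξ, 2 * ((2*u-ξ)^(b-1) * Real.exp (-(a*u))))
      ≤ ∫ u in Ioi ξ, 2 * c2 * (u^(b-1) * Real.exp (-(a*u))) := by
    apply integral_mono_of_nonneg
    · filter_upwards [ae_restrict_mem measurableSet_Ioi] with u hu
      have huξ : ξ < u := hu
      have hu0 : 0 < u := lt_of_le_of_lt hξ huξ
      have h1 : (0:ℝ) < 2*u-ξ := by linarith
      positivity
    · exact hbase.const_mul _
    · filter_upwards [ae_restrict_mem measurableSet_Ioi] with u hu
      exact hptC u hu
  have hconst : ((2*(N:ℝ))^N * (a⁻¹)^N) = (2*(N:ℝ)/a)^N := by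
    rw [div_eq_mul_inv]
    exact (mul_pow _ _ _).symm
  calc (∫ t in Ioi ξ, t^(b-1) * Real.exp (-(a*t)) * (t-ξ)^N)
      ≤ ∫ t in Ioi ξ, (2*(N:ℝ)/a)^N * (t^(b-1) * Real.exp (-(a*(t+ξ)/2))) := hA
    _ = (2*(N:ℝ)/a)^N * ∫ t in Ioi ξ, t^(b-1) * Real.exp (-(a*(t+ξ)/2)) :=
        MeasureTheory.integral_const_mul _ _
    _ = (2*(N:ℝ)/a)^N * ∫ u in Ioi ξ, 2 * ((2*u-ξ)^(b-1) * Real.exp (-(a*u))) := by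
        rw [hsub]
    _ ≤ (2*(N:ℝ)/a)^N * ∫ u in Ioi ξ, 2 * c2 * (u^(b-1) * Real.exp (-(a*u))) := by
        apply mul_le_mul_of_nonneg_left hB (by positivity)
    _ = ((2*(N:ℝ))^N * (a⁻¹)^N * (2 * c2)) * ∫ t in Ioi ξ, t^(b-1) * Real.exp (-(a*t)) := by
        rw [MeasureTheory.integral_const_mul, ← hconst]
        ring

/-! ### Part 5: main estimate -/

lemma main_est (hb : 0 < b)
    (hf : ∀ t : ℝ, f t = if t = 0 then 1 else ((1 - Real.exp (-t)) / t) ^ (b - 1))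
    {N : ℕ} (hN : 1 ≤ N) :
    ∃ C : ℝ, 1 ≤ C ∧ ∀ a : ℝ, 0 < a → ∀ ξ : ℝ, 0 ≤ ξ →
      |(∫ t in Ioi ξ, t^(b-1) * Real.exp (-(a*t)) * f t)
        - ∑ n ∈ Finset.range N, (iteratedDeriv n f ξ / (Nat.factorial n : ℝ)) *
            ∫ t in Ioi ξ, t^(b-1) * Real.exp (-(a*t)) * (t-ξ)^n|
      ≤ C * (a⁻¹)^N * ∫ t in Ioi ξ, t^(b-1) * Real.exp (-(a*t)) := by
  obtain ⟨M, hM0, hM⟩ := derivN_bound hb hf hN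
  refine ⟨(M / (Nat.factorial N : ℝ)) * ((2*(N:ℝ))^N * (2 * max 1 ((2:ℝ)^(b-1)))) + 1,
    le_add_of_nonneg_left (by positivity), ?_⟩
  intro a ha ξ hξ
  have hInt : ∀ n : ℕ, IntegrableOn
      (fun t => t^(b-1) * Real.exp (-(a*t)) * (t-ξ)^n) (Ioi ξ) :=
    fun n => integrableOn_w hb ha hξ n
  have hIntD : ∀ n : ℕ, IntegrableOn
      (fun t => (iteratedDeriv n f ξ / (Nat.factorial n : ℝ)) *
        (t^(b-1) * Real.exp (-(a*t)) * (t-ξ)^n)) (Ioi ξ) :=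
    fun n => (hInt n).const_mul _
  have hIntF : IntegrableOn (fun t => t^(b-1) * Real.exp (-(a*t)) * f t) (Ioi ξ) :=
    integrableOn_wf hb hf ha hξ
  -- rewrite the sum of integrals as a single integral
  have hsum : ∑ n ∈ Finset.range N, (iteratedDeriv n f ξ / (Nat.factorial n : ℝ)) *
        ∫ t in Ioi ξ, t^(b-1) * Real.exp (-(a*t)) * (t-ξ)^n
      = ∫ t in Ioi ξ, ∑ n ∈ Finset.range N,
          (iteratedDeriv n f ξ / (Nat.factorial n : ℝ)) *
          (t^(b-1) * Real.exp (-(a*t)) * (t-ξ)^n) := by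
    have h1 : ∀ n ∈ Finset.range N,
        (iteratedDeriv n f ξ / (Nat.factorial n : ℝ)) *
          ∫ t in Ioi ξ, t^(b-1) * Real.exp (-(a*t)) * (t-ξ)^n
        = ∫ t in Ioi ξ, (iteratedDeriv n f ξ / (Nat.factorial n : ℝ)) *
            (t^(b-1) * Real.exp (-(a*t)) * (t-ξ)^n) :=
      fun n _ => (MeasureTheory.integral_const_mul _ _).symm
    rw [Finset.sum_congr rfl h1, ← MeasureTheory.integral_finset_sum _ (fun n _ => hIntD n)]
  rw [hsum]
  have hdiff : (∫ t in Ioi ξ, t^(b-1) * Real.exp (-(a*t)) * f t)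
      - (∫ t in Ioi ξ, ∑ n ∈ Finset.range N,
          (iteratedDeriv n f ξ / (Nat.factorial n : ℝ)) *
          (t^(b-1) * Real.exp (-(a*t)) * (t-ξ)^n))
      = ∫ t in Ioi ξ, (t^(b-1) * Real.exp (-(a*t))) *
          (f t - ∑ n ∈ Finset.range N,
            (iteratedDeriv n f ξ / (Nat.factorial n : ℝ)) * (t-ξ)^n) := by
    rw [← integral_sub hIntF (integrable_finset_sum _ (fun n _ => hIntD n))]
    apply setIntegral_congr_fun measurableSet_Ioi
    intro t _
    simp only [mul_sub, Finset.mul_sum]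
    congr 1
    apply Finset.sum_congr rfl
    intro n _
    ring
  rw [hdiff]
  have hbnd : |∫ t in Ioi ξ, (t^(b-1) * Real.exp (-(a*t))) *
        (f t - ∑ n ∈ Finset.range N,
          (iteratedDeriv n f ξ / (Nat.factorial n : ℝ)) * (t-ξ)^n)|
      ≤ ∫ t in Ioi ξ, (M / (Nat.factorial N : ℝ)) *
          (t^(b-1) * Real.exp (-(a*t)) * (t-ξ)^N) := by
    rw [← Real.norm_eq_abs]
    apply MeasureTheory.norm_integral_le_of_norm_le ((hInt N).const_mul _)
    filter_upwards [ae_restrict_mem measurableSet_Ioi] with t ht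
    have htξ : ξ < t := ht
    have ht0 : 0 < t := lt_of_le_of_lt hξ htξ
    have h1 : ‖(t^(b-1) * Real.exp (-(a*t))) *
        (f t - ∑ n ∈ Finset.range N,
          (iteratedDeriv n f ξ / (Nat.factorial n : ℝ)) * (t-ξ)^n)‖
        = (t^(b-1) * Real.exp (-(a*t))) *
          |f t - ∑ n ∈ Finset.range N,
            (iteratedDeriv n f ξ / (Nat.factorial n : ℝ)) * (t-ξ)^n| := by
      rw [Real.norm_eq_abs, abs_mul, abs_of_nonneg (by positivity)]
    rw [h1]
    have h2 := taylor_bound hf hN hM hξ htξ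
    calc (t^(b-1) * Real.exp (-(a*t))) *
          |f t - ∑ n ∈ Finset.range N,
            (iteratedDeriv n f ξ / (Nat.factorial n : ℝ)) * (t-ξ)^n|
        ≤ (t^(b-1) * Real.exp (-(a*t))) * (M / (Nat.factorial N : ℝ) * (t-ξ)^N) :=
          mul_le_mul_of_nonneg_left h2 (by positivity)
      _ = (M / (Nat.factorial N : ℝ)) * (t^(b-1) * Real.exp (-(a*t)) * (t-ξ)^N) := by ring
  have hcmp := compare_FN hb ha hξ N
  have hMN : (0:ℝ) ≤ M / (Nat.factorial N : ℝ) := by positivity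
  have hw0 : (0:ℝ) ≤ ∫ t in Ioi ξ, t^(b-1) * Real.exp (-(a*t)) := by
    apply setIntegral_nonneg measurableSet_Ioi
    intro t ht
    have ht0 : 0 < t := lt_of_le_of_lt hξ ht
    positivity
  calc |∫ t in Ioi ξ, (t^(b-1) * Real.exp (-(a*t))) *
        (f t - ∑ n ∈ Finset.range N,
          (iteratedDeriv n f ξ / (Nat.factorial n : ℝ)) * (t-ξ)^n)|
      ≤ ∫ t in Ioi ξ, (M / (Nat.factorial N : ℝ)) *
          (t^(b-1) * Real.exp (-(a*t)) * (t-ξ)^N) := hbnd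
    _ = (M / (Nat.factorial N : ℝ)) *
        ∫ t in Ioi ξ, t^(b-1) * Real.exp (-(a*t)) * (t-ξ)^N :=
        MeasureTheory.integral_const_mul _ _
    _ ≤ (M / (Nat.factorial N : ℝ)) *
        (((2*(N:ℝ))^N * (a⁻¹)^N * (2 * max 1 ((2:ℝ)^(b-1)))) *
          ∫ t in Ioi ξ, t^(b-1) * Real.exp (-(a*t))) :=
        mul_le_mul_of_nonneg_left hcmp hMN
    _ ≤ ((M / (Nat.factorial N : ℝ)) * ((2*(N:ℝ))^N * (2 * max 1 ((2:ℝ)^(b-1)))) + 1) *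
          (a⁻¹)^N * ∫ t in Ioi ξ, t^(b-1) * Real.exp (-(a*t)) := by
        have h3 : (0:ℝ) ≤ (a⁻¹)^N := by positivity
        nlinarith [mul_nonneg h3 hw0, hMN,
          mul_nonneg (mul_nonneg hMN (by positivity : (0:ℝ) ≤ (2*(N:ℝ))^N *
            (2 * max 1 ((2:ℝ)^(b-1))))) (mul_nonneg h3 hw0)]

end UAE

/-- Uniform asymptotic expansion of the incomplete beta function: for fixed `b > 0` and
`N ≥ 1` there exist `C, A > 0` such that for all `a ≥ A` and `x ∈ (0,1]`, with `ξ = -log x`,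
`|I_x(a,b) - (Γ(a+b)/Γ(a)) ∑_{n<N} d_n F_n| ≤ C a^(-N) (Γ(a+b)/Γ(a)) F_0`. -/
theorem uniform_asymptotic_expansion (b : ℝ) (hb : 0 < b) (N : ℕ) (hN : 1 ≤ N)
    (f : ℝ → ℝ)
    (hf : ∀ t : ℝ, f t = if t = 0 then 1 else ((1 - Real.exp (-t)) / t) ^ (b - 1)) :
    ∃ C A : ℝ, 0 < C ∧ 0 < A ∧ ∀ a : ℝ, A ≤ a → ∀ x ∈ Set.Ioc (0 : ℝ) 1,
      ∀ ξ : ℝ, ξ = -Real.log x →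
      |(Real.Gamma (a + b) / (Real.Gamma a * Real.Gamma b)) *
          (∫ t in (0 : ℝ)..x, t ^ (a - 1) * (1 - t) ^ (b - 1))
        - (Real.Gamma (a + b) / Real.Gamma a) * ∑ n ∈ Finset.range N,
            (iteratedDeriv n f ξ / (Nat.factorial n : ℝ)) *
            ((1 / Real.Gamma b) *
              ∫ t in Set.Ioi ξ, t ^ (b - 1) * Real.exp (-a * t) * (t - ξ) ^ n)|
      ≤ C * a ^ (-(N : ℝ)) * (Real.Gamma (a + b) / Real.Gamma a) *
          ((1 / Real.Gamma b) * ∫ t in Set.Ioi ξ, t ^ (b - 1) * Real.exp (-a * t)) := by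
  obtain ⟨C0, hC01, hmain⟩ := UAE.main_est hb hf hN
  refine ⟨C0, 1, lt_of_lt_of_le one_pos hC01, one_pos, ?_⟩
  intro a ha x hx ξ hξdef
  obtain ⟨hx0, hx1⟩ := hx
  have ha0 : 0 < a := lt_of_lt_of_le one_pos ha
  have hξ0 : 0 ≤ ξ := by
    rw [hξdef, neg_nonneg]
    exact Real.log_nonpos hx0.le hx1
  have hΓa : 0 < Real.Gamma a := Real.Gamma_pos_of_pos ha0
  have hΓb : 0 < Real.Gamma b := Real.Gamma_pos_of_pos hb
  have hΓab : 0 < Real.Gamma (a+b) := Real.Gamma_pos_of_pos (by linarith)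
  simp only [neg_mul]
  rw [UAE.change_var hb hf ha0 hx0 hx1 hξdef]
  have hc : Real.Gamma (a+b) / Real.Gamma a * (1 / Real.Gamma b)
      = Real.Gamma (a+b) / (Real.Gamma a * Real.Gamma b) := by
    rw [div_mul_div_comm, mul_one]
  have hP : 0 < Real.Gamma (a+b) / (Real.Gamma a * Real.Gamma b) := by positivity
  have hfactor : Real.Gamma (a+b) / Real.Gamma a * ∑ n ∈ Finset.range N,
        (iteratedDeriv n f ξ / (Nat.factorial n : ℝ)) *
        ((1 / Real.Gamma b) * ∫ t in Ioi ξ, t^(b-1) * Real.exp (-(a*t)) * (t-ξ)^n)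
      = Real.Gamma (a+b) / (Real.Gamma a * Real.Gamma b) *
          ∑ n ∈ Finset.range N, (iteratedDeriv n f ξ / (Nat.factorial n : ℝ)) *
            ∫ t in Ioi ξ, t^(b-1) * Real.exp (-(a*t)) * (t-ξ)^n := by
    rw [Finset.mul_sum, Finset.mul_sum]
    apply Finset.sum_congr rfl
    intro n _
    calc Real.Gamma (a+b) / Real.Gamma a *
          ((iteratedDeriv n f ξ / (Nat.factorial n : ℝ)) *
            ((1 / Real.Gamma b) * ∫ t in Ioi ξ, t^(b-1) * Real.exp (-(a*t)) * (t-ξ)^n))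
        = (Real.Gamma (a+b) / Real.Gamma a * (1 / Real.Gamma b)) *
            ((iteratedDeriv n f ξ / (Nat.factorial n : ℝ)) *
              ∫ t in Ioi ξ, t^(b-1) * Real.exp (-(a*t)) * (t-ξ)^n) := by ring
      _ = _ := by rw [hc]
  rw [hfactor]
  have hLHS : Real.Gamma (a+b) / (Real.Gamma a * Real.Gamma b) *
        (∫ s in Ioi ξ, s^(b-1) * Real.exp (-(a*s)) * f s)
      - Real.Gamma (a+b) / (Real.Gamma a * Real.Gamma b) *
          ∑ n ∈ Finset.range N, (iteratedDeriv n f ξ / (Nat.factorial n : ℝ)) *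
            ∫ t in Ioi ξ, t^(b-1) * Real.exp (-(a*t)) * (t-ξ)^n
      = Real.Gamma (a+b) / (Real.Gamma a * Real.Gamma b) *
          ((∫ s in Ioi ξ, s^(b-1) * Real.exp (-(a*s)) * f s)
            - ∑ n ∈ Finset.range N, (iteratedDeriv n f ξ / (Nat.factorial n : ℝ)) *
                ∫ t in Ioi ξ, t^(b-1) * Real.exp (-(a*t)) * (t-ξ)^n) := by ring
  rw [hLHS, abs_mul, abs_of_pos hP]
  have hbd := hmain a ha0 ξ hξ0
  have hrpow : a ^ (-(N:ℝ)) = (a⁻¹)^N := by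
    rw [Real.rpow_neg ha0.le, Real.rpow_natCast, inv_pow]
  have hRHS : C0 * a ^ (-(N:ℝ)) * (Real.Gamma (a + b) / Real.Gamma a) *
      ((1 / Real.Gamma b) * ∫ t in Ioi ξ, t^(b-1) * Real.exp (-(a*t)))
      = Real.Gamma (a+b) / (Real.Gamma a * Real.Gamma b) *
          (C0 * (a⁻¹)^N * ∫ t in Ioi ξ, t^(b-1) * Real.exp (-(a*t))) := by
    rw [hrpow]
    calc C0 * (a⁻¹)^N * (Real.Gamma (a + b) / Real.Gamma a) *
        ((1 / Real.Gamma b) * ∫ t in Ioi ξ, t^(b-1) * Real.exp (-(a*t)))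
        = (Real.Gamma (a+b) / Real.Gamma a * (1 / Real.Gamma b)) *
            (C0 * (a⁻¹)^N * ∫ t in Ioi ξ, t^(b-1) * Real.exp (-(a*t))) := by ring
      _ = _ := by rw [hc]
  rw [hRHS]
  exact mul_le_mul_of_nonneg_left hbd hP.le
end

section
/- Let $a, b > 0$ and $0 \leq x < \tfrac12$. Then $I_x(a,b) = \frac{x^a (1-x)^{b-1}}{a\, B(a,b)} \sum_{n=0}^{\infty} \frac{(1-b)_n}{(a+1)_n} \left(\frac{x}{x-1}\right)^n$, where the series on the right-hand side converges absolutely and $(c)_n = c(c+1)\cdots(c+n-1)$ denotes the Pochhammer symbol (with $(c)_0 = 1$). -/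
open Real MeasureTheory Set

lemma ibeta_intble (p q x : ℝ) (hp : -1 < p) (hx0 : 0 ≤ x) (hx1 : x < 1) :
    IntervalIntegrable (fun t => t ^ p * (1 - t) ^ q) volume 0 x := by
  have h1 : IntervalIntegrable (fun t : ℝ => t ^ p) volume 0 x :=
    intervalIntegral.intervalIntegrable_rpow' hp
  have h2 : ContinuousOn (fun t : ℝ => (1 - t) ^ q) (uIcc 0 x) := by
    apply ContinuousOn.rpow_const
    · exact (continuous_const.sub continuous_id).continuousOn
    · intro t ht
      rw [uIcc_of_le hx0] at ht
      left
      have : t ≤ x := ht.2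
      nlinarith [ht.1]
  exact h1.mul_continuousOn h2

lemma ibeta_ibp (p q x : ℝ) (hp : 0 < p) (hx0 : 0 ≤ x) (hx1 : x < 1) :
    p * (∫ t in (0:ℝ)..x, t ^ (p - 1) * (1 - t) ^ q)
      = x ^ p * (1 - x) ^ q + q * ∫ t in (0:ℝ)..x, t ^ p * (1 - t) ^ (q - 1) := by
  have h1 : IntervalIntegrable (fun t => t ^ (p-1) * (1 - t) ^ q) volume 0 x :=
    ibeta_intble _ _ _ (by linarith) hx0 hx1
  have h2 : IntervalIntegrable (fun t => t ^ p * (1 - t) ^ (q-1)) volume 0 x :=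
    ibeta_intble _ _ _ (by linarith) hx0 hx1
  have key : ∫ t in (0:ℝ)..x,
      (p * (t ^ (p-1) * (1 - t) ^ q) - q * (t ^ p * (1 - t) ^ (q-1)))
      = x ^ p * (1 - x) ^ q - 0 ^ p * (1 - 0) ^ q := by
    apply intervalIntegral.integral_eq_sub_of_hasDeriv_right_of_le hx0
    · apply ContinuousOn.mul
      · intro t ht
        exact (Real.continuousAt_rpow_const t p (Or.inr hp.le)).continuousWithinAt
      · apply ContinuousOn.rpow_const
        · exact (continuous_const.sub continuous_id).continuousOn
        · intro t ht
          left; nlinarith [ht.1, ht.2]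
    · intro t ht
      have ht0 : t ≠ 0 := ne_of_gt ht.1
      have ht1 : (1:ℝ) - t ≠ 0 := by have := ht.2; intro h; nlinarith
      have d1 : HasDerivAt (fun s : ℝ => s ^ p) (p * t ^ (p-1)) t :=
        Real.hasDerivAt_rpow_const (Or.inl ht0)
      have d2 : HasDerivAt (fun s : ℝ => (1 - s) ^ q) ((-1) * q * (1 - t) ^ (q-1)) t := by
        have h0 : HasDerivAt (fun s : ℝ => 1 - s) (-1) t := by
          simpa using (hasDerivAt_id t).const_sub 1
        exact h0.rpow_const (Or.inl ht1)
      apply HasDerivAt.hasDerivWithinAt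
      refine (d1.fun_mul d2).congr_deriv ?_
      ring
    · exact ((h1.const_mul p).sub (h2.const_mul q))
  rw [intervalIntegral.integral_sub (h1.const_mul p) (h2.const_mul q),
    intervalIntegral.integral_const_mul, intervalIntegral.integral_const_mul] at key
  rw [Real.zero_rpow hp.ne'] at key
  linarith

/-- Convergent expansion for the incomplete beta function: for `a, b > 0` and
`0 ≤ x < 1/2`,
`I_x(a,b) = (x^a (1-x)^(b-1)/(a B(a,b))) ∑_{n≥0} ((1-b)_n/(a+1)_n) (x/(x-1))^n`,
where the series converges absolutely and `(c)_n = ∏_{k<n} (c+k)` is the Pochhammer symbol. -/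
theorem incompleteBeta_hypergeometric (a b x : ℝ) (ha : 0 < a) (hb : 0 < b)
    (hx0 : 0 ≤ x) (hx1 : x < 1 / 2) :
    Summable (fun n : ℕ =>
      |(∏ k ∈ Finset.range n, (1 - b + (k : ℝ))) / (∏ k ∈ Finset.range n, (a + 1 + (k : ℝ))) *
        (x / (x - 1)) ^ n|) ∧
    (Real.Gamma (a + b) / (Real.Gamma a * Real.Gamma b)) *
        ∫ t in (0 : ℝ)..x, t ^ (a - 1) * (1 - t) ^ (b - 1)
      = x ^ a * (1 - x) ^ (b - 1) /
          (a * (Real.Gamma a * Real.Gamma b / Real.Gamma (a + b))) *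
        ∑' n : ℕ,
          (∏ k ∈ Finset.range n, (1 - b + (k : ℝ))) / (∏ k ∈ Finset.range n, (a + 1 + (k : ℝ))) *
            (x / (x - 1)) ^ n := by
  have h1x : 0 < 1 - x := by linarith
  have hx1' : x < 1 := by linarith
  set c : ℕ → ℝ := fun n =>
    (∏ k ∈ Finset.range n, (1 - b + (k : ℝ))) / (∏ k ∈ Finset.range n, (a + 1 + (k : ℝ)))
    with hcdef
  set z : ℝ := x / (x - 1) with hzdef
  have hQpos : ∀ n : ℕ, (0:ℝ) < ∏ k ∈ Finset.range n, (a + 1 + (k : ℝ)) := by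
    intro n
    apply Finset.prod_pos
    intro k _
    positivity
  have hcrec : ∀ n : ℕ, c (n+1) = c n * ((1 - b + n) / (a + 1 + n)) := by
    intro n
    simp only [hcdef, Finset.prod_range_succ]
    rw [mul_div_mul_comm]
  set r : ℝ := x / (1 - x) with hrdef
  have hr0 : 0 ≤ r := by positivity
  have hr1 : r < 1 := by
    rw [div_lt_one h1x]; linarith
  have hzabs : |z| = r := by
    rw [hzdef, hrdef, abs_div, abs_of_nonneg hx0, abs_of_neg (by linarith : x - 1 < 0)]
    ring_nf
  set N₀ : ℕ := ⌈b⌉₊ with hN₀def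
  have hbN₀ : b ≤ N₀ := Nat.le_ceil b
  have hratio : ∀ n : ℕ, N₀ ≤ n → |(1 - b + n) / (a + 1 + n)| ≤ 1 := by
    intro n hn
    have hcast : (N₀ : ℝ) ≤ n := by exact_mod_cast hn
    have h1 : 0 ≤ 1 - b + n := by linarith
    have h2 : (0:ℝ) < a + 1 + n := by positivity
    rw [abs_div, abs_of_nonneg h1, abs_of_pos h2, div_le_one h2]
    linarith
  have hsum : Summable (fun n : ℕ => |c n * z ^ n|) := by
    apply summable_of_ratio_norm_eventually_le (r := r) hr1
    filter_upwards [Filter.eventually_ge_atTop N₀] with n hn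
    rw [Real.norm_eq_abs, Real.norm_eq_abs, abs_abs, abs_abs]
    have h1 : |c (n+1) * z ^ (n+1)| = (|(1 - b + n) / (a + 1 + n)| * |z|) * |c n * z ^ n| := by
      rw [hcrec n, pow_succ,
        show c n * ((1 - b + (n:ℝ)) / (a + 1 + n)) * (z ^ n * z)
          = ((1 - b + (n:ℝ)) / (a + 1 + n)) * z * (c n * z ^ n) from by ring,
        abs_mul, abs_mul]
    rw [h1, hzabs]
    have h2 := hratio n hn
    have h3 : 0 ≤ |c n * z ^ n| := abs_nonneg _
    nlinarith [mul_nonneg (sub_nonneg.mpr h2) (mul_nonneg hr0 h3)]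
  refine ⟨hsum, ?_⟩
  rcases eq_or_lt_of_le hx0 with h0 | hx
  · rw [← h0]
    simp [Real.zero_rpow ha.ne']
  -- main case : 0 < x
  set J : ℕ → ℝ := fun n => ∫ t in (0:ℝ)..x, t ^ (a + n - 1) * (1 - t) ^ (b - 1 - n) with hJdef
  have hrec : ∀ n : ℕ,
      (a + n) * J n = x ^ (a + n) * (1 - x) ^ (b - 1 - n) - (1 - b + n) * J (n+1) := by
    intro n
    have h := ibeta_ibp (a + n) (b - 1 - n) x (by positivity) hx0 hx1'
    have e : (∫ t in (0:ℝ)..x, t ^ (a + (n:ℝ)) * (1 - t) ^ (b - 1 - n - 1)) = J (n+1) := by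
      have e1 : a + ((n:ℝ) + 1) - 1 = a + n := by ring
      have e2 : b - 1 - ((n:ℝ) + 1) = b - 1 - n - 1 := by ring
      simp only [hJdef, Nat.cast_add, Nat.cast_one, e1, e2]
    rw [e] at h
    have hJn : J n = ∫ t in (0:ℝ)..x, t ^ (a + (n:ℝ) - 1) * (1 - t) ^ (b - 1 - n) := by
      simp only [hJdef]
    rw [← hJn] at h
    linarith
  have hc : ∀ n : ℕ, c (n+1) * (a + 1 + n) = c n * (1 - b + n) := by
    intro n
    rw [hcrec n]
    have : (a + 1 + (n:ℝ)) ≠ 0 := by positivity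
    field_simp
  have hc0 : c 0 = 1 := by simp [hcdef]
  have hclaim : ∀ N : ℕ, a * J 0
      = (∑ n ∈ Finset.range N, c n * (-1:ℝ)^n * (x ^ (a + n) * (1 - x) ^ (b - 1 - n)))
        + c N * (-1:ℝ)^N * ((a + N) * J N) := by
    intro N
    induction N with
    | zero => simp [hc0]
    | succ N ih =>
      rw [Finset.sum_range_succ]
      have hstep : c N * (-1:ℝ)^N * ((a + N) * J N)
          = c N * (-1:ℝ)^N * (x ^ (a + N) * (1 - x) ^ (b - 1 - N))
            + c (N+1) * (-1:ℝ)^(N+1) * ((a + 1 + N) * J (N+1)) := by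
        rw [hrec N]
        linear_combination ((-1:ℝ)^N * J (N+1)) * hc N
      rw [ih, hstep]
      push_cast
      ring
  set M : ℝ := max 1 ((1 - x) ^ (b - 1)) with hMdef
  have hM1 : (1:ℝ) ≤ M := le_max_left _ _
  have hMpos : (0:ℝ) < M := by linarith
  have hJub : ∀ N : ℕ, J N ≤ M * (1 - x) ^ (-(N:ℝ)) * (x ^ (a + N) / (a + N)) := by
    intro N
    have haN : (0:ℝ) < a + N := by positivity
    have hint : (∫ t in (0:ℝ)..x, (M * (1 - x) ^ (-(N:ℝ))) * t ^ (a + N - 1))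
        = M * (1 - x) ^ (-(N:ℝ)) * (x ^ (a + N) / (a + N)) := by
      rw [intervalIntegral.integral_const_mul, integral_rpow (Or.inl (by linarith))]
      have e : a + (N:ℝ) - 1 + 1 = a + N := by ring
      rw [e, Real.zero_rpow haN.ne']
      ring
    have hmono : J N ≤ ∫ t in (0:ℝ)..x, (M * (1 - x) ^ (-(N:ℝ))) * t ^ (a + N - 1) := by
      apply intervalIntegral.integral_mono_on hx0
      · exact ibeta_intble _ _ _ (by linarith) hx0 hx1'
      · exact (intervalIntegral.intervalIntegrable_rpow' (by linarith)).const_mul _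
      · intro t ht
        have h1t : 0 < 1 - t := by nlinarith [ht.2]
        have hb1 : (1 - t) ^ (b - 1 - (N:ℝ)) ≤ M * (1 - x) ^ (-(N:ℝ)) := by
          have he : (1 - t) ^ (b - 1 - (N:ℝ)) = (1 - t) ^ (b - 1) * (1 - t) ^ (-(N:ℝ)) := by
            rw [← Real.rpow_add h1t]
            ring_nf
          rw [he]
          have e1 : (1 - t) ^ (b - 1) ≤ M := by
            rcases le_or_gt 1 b with hb' | hb'
            · exact le_trans
                (Real.rpow_le_one h1t.le (by linarith [ht.1]) (by linarith)) hM1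
            · exact le_trans
                (Real.rpow_le_rpow_of_nonpos h1x (by linarith [ht.2]) (by linarith))
                (le_max_right _ _)
          have e2 : (1 - t) ^ (-(N:ℝ)) ≤ (1 - x) ^ (-(N:ℝ)) := by
            apply Real.rpow_le_rpow_of_nonpos h1x (by linarith [ht.2])
            simp [Nat.cast_nonneg]
          have p1 : 0 ≤ (1 - t) ^ (-(N:ℝ)) := Real.rpow_nonneg h1t.le _
          have p2 : 0 ≤ (1 - t) ^ (b - 1) := Real.rpow_nonneg h1t.le _
          nlinarith
        calc t ^ (a + (N:ℝ) - 1) * (1 - t) ^ (b - 1 - (N:ℝ))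
            ≤ t ^ (a + (N:ℝ) - 1) * (M * (1 - x) ^ (-(N:ℝ))) :=
              mul_le_mul_of_nonneg_left hb1 (Real.rpow_nonneg ht.1 _)
          _ = M * (1 - x) ^ (-(N:ℝ)) * t ^ (a + N - 1) := by ring
    exact le_trans hmono (le_of_eq hint)
  have hJnn : ∀ N : ℕ, 0 ≤ J N := by
    intro N
    apply intervalIntegral.integral_nonneg hx0
    intro t ht
    have h1t : 0 ≤ 1 - t := by nlinarith [ht.2]
    exact mul_nonneg (Real.rpow_nonneg ht.1 _) (Real.rpow_nonneg h1t _)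
  have hcbd : ∀ N : ℕ, N₀ ≤ N → |c N| ≤ |c N₀| := by
    intro N hN
    induction N, hN using Nat.le_induction with
    | base => exact le_refl _
    | succ n hn ih =>
      rw [hcrec n, abs_mul]
      calc |c n| * |(1 - b + (n:ℝ)) / (a + 1 + n)| ≤ |c n| * 1 :=
            mul_le_mul_of_nonneg_left (hratio n hn) (abs_nonneg _)
        _ = |c n| := mul_one _
        _ ≤ |c N₀| := ih
  have habs : ∀ N : ℕ, N₀ ≤ N →
      |c N * (-1:ℝ)^N * ((a + N) * J N)| ≤ (|c N₀| * M * x ^ a) * r ^ N := by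
    intro N hN
    have haN : (0:ℝ) < a + N := by positivity
    have hJN := hJub N
    have e : |c N * (-1:ℝ)^N * ((a + N) * J N)| = |c N| * ((a + N) * J N) := by
      rw [abs_mul, abs_mul, abs_pow, abs_neg, abs_one, one_pow, mul_one,
        abs_of_nonneg (mul_nonneg haN.le (hJnn N))]
    rw [e]
    have key : (a + (N:ℝ)) * J N ≤ M * x ^ a * r ^ N := by
      have h1 : (a + (N:ℝ)) * J N ≤ M * (1 - x) ^ (-(N:ℝ)) * x ^ (a + N) := by
        have := mul_le_mul_of_nonneg_left hJN haN.le
        calc (a + (N:ℝ)) * J N ≤ (a + N) * (M * (1 - x) ^ (-(N:ℝ)) * (x ^ (a + N) / (a + N))) :=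
              this
          _ = M * (1 - x) ^ (-(N:ℝ)) * x ^ (a + N) := by field_simp
      have h2 : M * (1 - x) ^ (-(N:ℝ)) * x ^ (a + N) = M * x ^ a * r ^ N := by
        rw [Real.rpow_add hx, Real.rpow_natCast, Real.rpow_neg h1x.le, Real.rpow_natCast,
          hrdef, div_pow]
        field_simp
      linarith
    calc |c N| * ((a + N) * J N) ≤ |c N₀| * (M * x ^ a * r ^ N) := by
          apply mul_le_mul (hcbd N hN) key (mul_nonneg haN.le (hJnn N)) (abs_nonneg _)
      _ = (|c N₀| * M * x ^ a) * r ^ N := by ring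
  have hT0 : Filter.Tendsto (fun N : ℕ => c N * (-1:ℝ)^N * ((a + N) * J N))
      Filter.atTop (nhds 0) := by
    apply squeeze_zero_norm' (a := fun N : ℕ => (|c N₀| * M * x ^ a) * r ^ N)
    · filter_upwards [Filter.eventually_ge_atTop N₀] with N hN
      rw [Real.norm_eq_abs]
      exact habs N hN
    · simpa using (tendsto_pow_atTop_nhds_zero_of_lt_one hr0 hr1).const_mul
        (|c N₀| * M * x ^ a)
  have hterm : ∀ n : ℕ, c n * (-1:ℝ)^n * (x ^ (a + n) * (1 - x) ^ (b - 1 - n))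
      = x ^ a * (1 - x) ^ (b - 1) * (c n * z ^ n) := by
    intro n
    have e1 : x ^ (a + (n:ℝ)) = x ^ a * x ^ n := by
      rw [Real.rpow_add hx, Real.rpow_natCast]
    have e2 : (1 - x) ^ (b - 1 - (n:ℝ)) = (1 - x) ^ (b - 1) / (1 - x) ^ n := by
      rw [show b - 1 - (n:ℝ) = (b - 1) + (-(n:ℝ)) from by ring, Real.rpow_add h1x,
        Real.rpow_neg h1x.le, Real.rpow_natCast, div_eq_mul_inv]
    have e3 : z ^ n = (-1:ℝ)^n * (x ^ n / (1 - x) ^ n) := by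
      rw [hzdef, show x - 1 = -(1 - x) from by ring, div_neg, neg_pow, div_pow]
    rw [e1, e2, e3]
    have hne : ((1:ℝ) - x) ^ n ≠ 0 := pow_ne_zero n h1x.ne'
    field_simp
  have hsumf : Summable (fun n : ℕ => c n * z ^ n) := hsum.of_abs
  have hpartial : Filter.Tendsto (fun N : ℕ => ∑ n ∈ Finset.range N, c n * z ^ n)
      Filter.atTop (nhds (∑' n : ℕ, c n * z ^ n)) := hsumf.hasSum.tendsto_sum_nat
  have hkey : a * J 0 = x ^ a * (1 - x) ^ (b - 1) * (∑' n : ℕ, c n * z ^ n) := by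
    have heq : (fun N : ℕ => x ^ a * (1 - x) ^ (b - 1) * (∑ n ∈ Finset.range N, c n * z ^ n)
        + c N * (-1:ℝ)^N * ((a + N) * J N)) = fun _ : ℕ => a * J 0 := by
      funext N
      rw [Finset.mul_sum]
      rw [hclaim N]
      congr 1
      apply Finset.sum_congr rfl
      intro n _
      exact (hterm n).symm
    have hlim : Filter.Tendsto
        (fun N : ℕ => x ^ a * (1 - x) ^ (b - 1) * (∑ n ∈ Finset.range N, c n * z ^ n)
          + c N * (-1:ℝ)^N * ((a + N) * J N)) Filter.atTop
        (nhds (x ^ a * (1 - x) ^ (b - 1) * (∑' n : ℕ, c n * z ^ n) + 0)) :=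
      (hpartial.const_mul _).add hT0
    rw [heq] at hlim
    have := tendsto_nhds_unique hlim tendsto_const_nhds
    linarith [this]
  have hJ00 : J 0 = ∫ t in (0:ℝ)..x, t ^ (a - 1) * (1 - t) ^ (b - 1) := by
    simp only [hJdef, Nat.cast_zero, add_zero, sub_zero]
  have hGa := Real.Gamma_pos_of_pos ha
  have hGb := Real.Gamma_pos_of_pos hb
  have hGab := Real.Gamma_pos_of_pos (by linarith : (0:ℝ) < a + b)
  rw [← hJ00]
  rw [div_mul_eq_mul_div, div_mul_eq_mul_div, div_eq_div_iff (by positivity) (by positivity)]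
  have htsum : (∑' n : ℕ,
      (∏ k ∈ Finset.range n, (1 - b + (k : ℝ))) / (∏ k ∈ Finset.range n, (a + 1 + (k : ℝ))) *
        (x / (x - 1)) ^ n) = ∑' n : ℕ, c n * z ^ n := rfl
  rw [htsum]
  have hG : Real.Gamma (a+b) * (a * (Real.Gamma a * Real.Gamma b / Real.Gamma (a+b)))
      = a * (Real.Gamma a * Real.Gamma b) := by
    field_simp
  linear_combination J 0 * hG + (Real.Gamma a * Real.Gamma b) * hkey
end
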